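/- For positive integers M1, M2 and positive reals p1, p2, one has p2 M2 ∫_0^1 (1 − x^{p1})^{M1} (1 − x^{p2})^{M2−1} x^{p2−1} dx = ∑_{k=1}^{M2} ∑_{j=1}^{M1} (-1)^{j+k} C(M1,j) C(M2,k) · p1 j/(p1 j + p2 k). -/

import Mathlib

open Finset Real

lemma aux_expand (n : ℕ) (p : ℝ) (x : ℝ) (hx : 0 < x) :
    (1 - x ^ p) ^ n = ∑ j ∈ Finset.range (n+1), (-1:ℝ)^j * (n.choose j : ℝ) * x ^ (p * j) := by
  have h : (1 - x ^ p) = (-(x^p)) + 1 := by ring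
  rw [h, add_pow]
  refine Finset.sum_congr rfl fun j _ => ?_
  have hxp : x ^ (p * (j:ℝ)) = (x ^ p) ^ j := by
    rw [Real.rpow_mul hx.le, Real.rpow_natCast]
  rw [hxp]
  ring

lemma aux_alt (n : ℕ) (hn : 0 < n) :
    ∑ j ∈ Finset.range (n+1), (-1:ℝ)^j * (n.choose j : ℝ) = 0 := by
  have := add_pow (-1 : ℝ) 1 n
  simp only [one_pow, mul_one, neg_add_cancel] at this
  rw [← this, zero_pow hn.ne']

lemma aux_integral (M1 M2 : ℕ) (hM2 : 0 < M2)
    (p1 p2 : ℝ) (hp1 : 0 < p1) (hp2 : 0 < p2) :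
    ∫ x in (0:ℝ)..1, (1 - x ^ p1) ^ M1 * (1 - x ^ p2) ^ (M2 - 1) * x ^ (p2 - 1)
    = ∑ j ∈ Finset.range (M1+1), ∑ k ∈ Finset.range M2,
        ((-1:ℝ)^(j+k) * (M1.choose j) * ((M2-1).choose k)) * (1 / (p1*j + p2*k + p2)) := by
  have hM2' : M2 - 1 + 1 = M2 := Nat.succ_pred_eq_of_pos hM2
  have hden : ∀ j k : ℕ, (0:ℝ) < p1*j + p2*k + p2 := by
    intro j k
    have h1 : (0:ℝ) ≤ p1*j := by positivity
    have h2 : (0:ℝ) ≤ p2*k := by positivity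
    linarith
  have hint : ∀ j k : ℕ, IntervalIntegrable
      (fun x : ℝ => ((-1:ℝ)^(j+k) * (M1.choose j) * ((M2-1).choose k)) * x ^ (p1*j + p2*k + (p2-1)))
      MeasureTheory.volume 0 1 := fun j k =>
    (intervalIntegral.intervalIntegrable_rpow' (by linarith [hden j k])).const_mul _
  have hint2 : ∀ j : ℕ, IntervalIntegrable
      (fun x : ℝ => ∑ k ∈ Finset.range M2,
        ((-1:ℝ)^(j+k) * (M1.choose j) * ((M2-1).choose k)) * x ^ (p1*j + p2*k + (p2-1)))
      MeasureTheory.volume 0 1 := by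
    intro j
    have := IntervalIntegrable.sum (μ := MeasureTheory.volume) (a := (0:ℝ)) (b := 1)
      (Finset.range M2)
      (f := fun k => fun x : ℝ =>
        ((-1:ℝ)^(j+k) * (M1.choose j) * ((M2-1).choose k)) * x ^ (p1*j + p2*k + (p2-1)))
      (fun k _ => hint j k)
    rwa [Finset.sum_fn] at this
  have hstep1 : ∫ x in (0:ℝ)..1, (1 - x ^ p1) ^ M1 * (1 - x ^ p2) ^ (M2 - 1) * x ^ (p2 - 1)
      = ∫ x in (0:ℝ)..1, ∑ j ∈ Finset.range (M1+1), ∑ k ∈ Finset.range M2,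
          ((-1:ℝ)^(j+k) * (M1.choose j) * ((M2-1).choose k)) * x ^ (p1*j + p2*k + (p2-1)) := by
    apply intervalIntegral.integral_congr_ae
    filter_upwards with x hx
    rw [Set.uIoc_of_le zero_le_one] at hx
    have hx0 : (0:ℝ) < x := hx.1
    rw [aux_expand M1 p1 x hx0, aux_expand (M2-1) p2 x hx0, hM2', Finset.sum_mul_sum,
      Finset.sum_mul]
    refine Finset.sum_congr rfl fun j _ => ?_
    rw [Finset.sum_mul]
    refine Finset.sum_congr rfl fun k _ => ?_
    rw [show p1*j + p2*k + (p2-1) = p1*j + (p2*k + (p2-1)) by ring,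
      Real.rpow_add hx0, Real.rpow_add hx0, pow_add]
    ring
  rw [hstep1, intervalIntegral.integral_finset_sum (fun j _ => hint2 j)]
  refine Finset.sum_congr rfl fun j _ => ?_
  rw [intervalIntegral.integral_finset_sum (fun k _ => hint j k)]
  refine Finset.sum_congr rfl fun k _ => ?_
  rw [intervalIntegral.integral_const_mul, integral_rpow (Or.inl (by linarith [hden j k]))]
  rw [show p1*j + p2*k + (p2-1) + 1 = p1*j + p2*k + p2 by ring]
  rw [Real.one_rpow, Real.zero_rpow (hden j k).ne']
  norm_num

lemma aux_key (M1 M2 : ℕ) (hM2 : 0 < M2) (p1 p2 : ℝ) (hp1 : 0 < p1) (hp2 : 0 < p2) (j k : ℕ) :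
    p2 * M2 * (((-1:ℝ)^(j+k) * (M1.choose j) * ((M2-1).choose k)) * (1 / (p1*j + p2*k + p2)))
    = ((-1:ℝ)^j * (M1.choose j)) * ((-1:ℝ)^k * (M2.choose (k+1)))
      - (-1:ℝ)^(j+k) * (M1.choose j) * (M2.choose (k+1)) * (p1*j / (p1*j + p2*k + p2)) := by
  have hM2' : M2 - 1 + 1 = M2 := Nat.succ_pred_eq_of_pos hM2
  have hnat : M2 * ((M2-1).choose k) = (M2.choose (k+1)) * (k+1) := by
    have := Nat.add_one_mul_choose_eq (M2-1) k
    rwa [hM2'] at this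
  have hnatR : (M2:ℝ) * ((M2-1).choose k) = (M2.choose (k+1)) * ((k:ℝ)+1) := by
    exact_mod_cast hnat
  have h1 : p1*(j:ℝ) / (p1*j + p2*k + p2) = 1 - p2*((k:ℝ)+1)/(p1*j + p2*k + p2) := by
    rw [eq_sub_iff_add_eq]
    field_simp
    ring
  rw [h1, pow_add]
  field_simp
  linear_combination (p2 * (M1.choose j)) * hnatR

theorem stmt_2 (M1 M2 : ℕ) (hM1 : 0 < M1) (hM2 : 0 < M2)
    (p1 p2 : ℝ) (hp1 : 0 < p1) (hp2 : 0 < p2) :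
    p2 * M2 *
      ∫ x in (0:ℝ)..1, (1 - x ^ p1) ^ M1 * (1 - x ^ p2) ^ (M2 - 1) * x ^ (p2 - 1)
    = ∑ k ∈ Finset.Icc 1 M2, ∑ j ∈ Finset.Icc 1 M1,
        (-1 : ℝ) ^ (j + k) * (M1.choose j) * (M2.choose k) *
          (p1 * j / (p1 * j + p2 * k)) := by
  rw [aux_integral M1 M2 hM2 p1 p2 hp1 hp2]
  rw [Finset.mul_sum]
  have step1 : ∀ j ∈ Finset.range (M1+1),
      p2 * M2 * ∑ k ∈ Finset.range M2,
        ((-1:ℝ)^(j+k) * (M1.choose j) * ((M2-1).choose k)) * (1 / (p1*j + p2*k + p2))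
      = (∑ k ∈ Finset.range M2, ((-1:ℝ)^j * (M1.choose j)) * ((-1:ℝ)^k * (M2.choose (k+1))))
        - ∑ k ∈ Finset.range M2,
            (-1:ℝ)^(j+k) * (M1.choose j) * (M2.choose (k+1)) * (p1*j / (p1*j + p2*k + p2)) := by
    intro j _
    rw [Finset.mul_sum, ← Finset.sum_sub_distrib]
    exact Finset.sum_congr rfl fun k _ => aux_key M1 M2 hM2 p1 p2 hp1 hp2 j k
  rw [Finset.sum_congr rfl step1, Finset.sum_sub_distrib, ← Finset.sum_mul_sum,
    aux_alt M1 hM1, zero_mul, zero_sub, Finset.sum_comm, ← Finset.sum_neg_distrib]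
  rw [show Finset.Icc 1 M2 = Finset.Ico 1 (M2+1) from (Finset.Ico_add_one_right_eq_Icc 1 M2).symm,
    Finset.sum_Ico_eq_sum_range]
  simp only [Nat.add_sub_cancel]
  refine Finset.sum_congr rfl fun k _ => ?_
  rw [Finset.sum_range_succ']
  simp only [Nat.cast_zero, mul_zero, zero_div, add_zero]
  rw [← Finset.sum_neg_distrib]
  rw [show Finset.Icc 1 M1 = Finset.Ico 1 (M1+1) from (Finset.Ico_add_one_right_eq_Icc 1 M1).symm,
    Finset.sum_Ico_eq_sum_range]
  simp only [Nat.add_sub_cancel]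
  refine Finset.sum_congr rfl fun j _ => ?_
  rw [Nat.add_comm 1 j, Nat.add_comm 1 k]
  push_cast
  rw [show p1*((j:ℝ)+1)+p2*((k:ℝ)+1) = p1*((j:ℝ)+1)+p2*(k:ℝ)+p2 by ring]
  rw [show j+1+(k+1) = (j+1+k)+1 by omega, pow_succ]
  ring
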